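/- Let s_n = 1 + Σ_{k=0}^{n} j_k where j_0 = 0 and j_n = (-1/n) (the Jacobi symbol) for n ≥ 1. Then for every n ≥ 1, s_n equals 1 plus the number of runs (maximal blocks of equal digits) in the binary representation of n. -/

import Mathlib

open Classical

/-- The Jacobi sequence: `j 0 = 0` and `j n = (-1/n)` (Jacobi symbol) for `n ≥ 1`. -/
def jac (n : ℕ) : ℤ := if n = 0 then 0 else jacobiSym (-1) n

/-- `s n = 1 + Σ_{k=0}^n j k`. -/
def s (n : ℕ) : ℤ := 1 + ∑ k ∈ Finset.range (n + 1), jac k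

/-- The number of runs (maximal blocks of equal digits) in the binary
representation of `n`, with `runs 0 = 0`. -/
noncomputable def binRuns (n : ℕ) : ℕ :=
  if n = 0 then 0
  else 1 + ((Finset.range (Nat.log2 n)).filter
    (fun i => n.testBit i ≠ n.testBit (i + 1))).card

lemma binRuns_pos (n : ℕ) (h : n ≠ 0) :
    binRuns n = 1 + ((Finset.range (Nat.log2 n)).filter
      (fun i => n.testBit i ≠ n.testBit (i + 1))).card := by
  rw [binRuns, if_neg h]

lemma binRuns_rec (b m : ℕ) (hb : b ≤ 1) (hm : 1 ≤ m) :
    binRuns (2 * m + b) = binRuns m + (if b = m % 2 then 0 else 1) := by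
  set n := 2 * m + b with hn
  have hdiv : n / 2 = m := by omega
  have hlog : Nat.log2 n = Nat.log2 m + 1 := by
    rw [Nat.log2_def, if_pos (by omega), hdiv]
  have hsucc : ∀ i, n.testBit (i + 1) = m.testBit i := by
    intro i; rw [Nat.testBit_succ, hdiv]
  rw [binRuns_pos n (by omega), binRuns_pos m (by omega), hlog]
  rw [Finset.card_filter, Finset.sum_range_succ', Finset.card_filter]
  have h1 : ∀ i : ℕ, (if n.testBit (i+1) ≠ n.testBit (i+1+1) then 1 else 0)
      = (if m.testBit i ≠ m.testBit (i+1) then 1 else 0) := by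
    intro i; rw [hsucc, hsucc]
  simp only [h1]
  have h0 : (if n.testBit 0 ≠ n.testBit (0+1) then 1 else 0)
      = (if b = m % 2 then 0 else 1) := by
    rw [hsucc, Nat.testBit_zero, Nat.testBit_zero]
    have : n % 2 = b := by omega
    rw [this]
    rcases Nat.eq_or_lt_of_le hb with h | h
    · have hb1 : b = 1 := h
      rcases Nat.mod_two_eq_zero_or_one m with h2 | h2 <;> simp [hb1, h2]
    · have hb0 : b = 0 := by omega
      rcases Nat.mod_two_eq_zero_or_one m with h2 | h2 <;> simp [hb0, h2]
  rw [h0]; ring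

lemma binRuns_one : binRuns 1 = 1 := by
  have : Nat.log2 1 = 0 := by rw [Nat.log2_def]; simp
  rw [binRuns_pos 1 one_ne_zero, this]; simp

lemma jac_two_mul (m : ℕ) (hm : m ≠ 0) : jac (2 * m) = jac m := by
  rw [jac, if_neg (by omega), jac, if_neg hm,
    jacobiSym.mul_right' _ two_ne_zero hm]
  have h2 : jacobiSym (-1) 2 = 1 := by
    rw [jacobiSym]; norm_num [Nat.primeFactorsList]
  rw [h2, one_mul]

lemma jac_odd (m : ℕ) : jac (2 * m + 1) = if m % 2 = 0 then 1 else -1 := by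
  rw [jac, if_neg (by omega), jacobiSym.at_neg_one (by exact ⟨m, by ring⟩)]
  rcases Nat.mod_two_eq_zero_or_one m with h | h
  · rw [if_pos h, ZMod.χ₄_nat_one_mod_four (by omega)]
  · rw [if_neg (by omega), ZMod.χ₄_nat_three_mod_four (by omega)]

lemma key (n : ℕ) (hn : 1 ≤ n) : jac n = (binRuns n : ℤ) - binRuns (n - 1) := by
  induction n using Nat.strong_induction_on with
  | _ n ih =>
    rcases Nat.even_or_odd n with ⟨m, hm⟩ | ⟨m, hm⟩
    · -- n = 2m, m ≥ 1
      have hm1 : 1 ≤ m := by omega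
      have hn2 : n = 2 * m := by omega
      subst hn2
      rw [jac_two_mul m (by omega)]
      rcases Nat.eq_or_lt_of_le hm1 with h1 | h1
      · -- m = 1
        have : m = 1 := h1.symm
        subst this
        rw [jac, if_neg one_ne_zero, jacobiSym.one_right]
        have e1 : binRuns (2 * 1) = 2 := by
          rw [binRuns_rec 0 1 (by norm_num) le_rfl, binRuns_one]; norm_num
        have e2 : (2 * 1 - 1 : ℕ) = 1 := rfl
        rw [e1, e2, binRuns_one]; norm_num
      · -- m ≥ 2
        have ihm := ih m (by omega) hm1
        have e1 := binRuns_rec 0 m (by norm_num) hm1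
        have e2 : 2 * m - 1 = 2 * (m - 1) + 1 := by omega
        have e3 := binRuns_rec 1 (m - 1) le_rfl (by omega)
        simp only [Nat.add_zero] at e1
        have e4 : (m - 1) % 2 = 1 - m % 2 := by omega
        rw [ihm]
        rw [e1, e2, e3, e4]
        rcases Nat.mod_two_eq_zero_or_one m with h2 | h2 <;>
          simp [h2] <;> push_cast <;> ring
    · -- n = 2m + 1
      have hn2 : n = 2 * m + 1 := by omega
      subst hn2
      rcases Nat.eq_zero_or_pos m with h0 | h0
      · subst h0
        simp only [mul_zero, zero_add]
        rw [jac_odd 0, binRuns_one]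
        simp [binRuns]
      · rw [jac_odd m]
        have e1 := binRuns_rec 1 m (le_rfl) h0
        have e2 : 2 * m + 1 - 1 = 2 * m + 0 := by omega
        have e3 := binRuns_rec 0 m (by norm_num) h0
        simp only [Nat.add_zero] at e2 e3
        rw [e1, e2, e3]
        rcases Nat.mod_two_eq_zero_or_one m with h2 | h2 <;>
          simp [h2] <;> push_cast <;> ring

lemma sum_jac (n : ℕ) : ∑ k ∈ Finset.range (n + 1), jac k = binRuns n := by
  induction n with
  | zero => simp [jac, binRuns]
  | succ n ihn =>
    rw [Finset.sum_range_succ, ihn, key (n + 1) (by omega)]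
    simp

theorem s_eq_one_add_runs (n : ℕ) (hn : 1 ≤ n) : s n = 1 + (binRuns n : ℤ) := by
  rw [s, sum_jac]
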